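/- If b is a baseline with f b ≠ c, then in the ordered occlusion procedure replacing features of v by baseline values one at a time, there is a first index k at which the resulting input is no longer classified c, and the set of the first k replaced features is a contrastive set containing a contrastive explanation. -/
import Mathlib

lemma min_contrastive {F : Type*} [DecidableEq F] {D : F → Type*} {K : Type*}
    (f : (∀ i, D i) → K) (v : ∀ i, D i) (c : K) :
    ∀ Y0 : Finset F, (∃ y : ∀ i, D i, (∀ i ∉ Y0, y i = v i) ∧ f y ≠ c) →
      ∃ Y : Finset F, Y ⊆ Y0 ∧
        (∃ y : ∀ i, D i, (∀ i ∉ Y, y i = v i) ∧ f y ≠ c) ∧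
        ∀ Y' : Finset F, Y' ⊂ Y →
          ¬ (∃ y : ∀ i, D i, (∀ i ∉ Y', y i = v i) ∧ f y ≠ c) := by
  intro Y0
  induction Y0 using Finset.strongInduction with
  | _ Y0 ih =>
    intro h
    by_cases hm : ∀ Y' : Finset F, Y' ⊂ Y0 →
        ¬ (∃ y : ∀ i, D i, (∀ i ∉ Y', y i = v i) ∧ f y ≠ c)
    · exact ⟨Y0, subset_rfl, h, hm⟩
    · push_neg at hm
      obtain ⟨Y', hY', hY'p⟩ := hm
      obtain ⟨Y, hsub, h1, h2⟩ := ih Y' hY' hY'p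
      exact ⟨Y, hsub.trans hY'.subset, h1, h2⟩

/-- in the ordered occlusion procedure with a baseline classified
differently, there is a first index k at which the classification changes; the
first k replaced features form a contrastive set containing a contrastive
explanation. -/
theorem stmt_17 {F : Type*} [Fintype F] [DecidableEq F] {D : F → Type*}
    [∀ i, Nonempty (D i)] {K : Type*}
    (f : (∀ i, D i) → K) (v b : ∀ i, D i) (c : K) (hv : f v = c) (hb : f b ≠ c)
    (n : ℕ) (hn : n = Fintype.card F) (p : Fin n → F) (hp : Function.Bijective p)
    (S : ℕ → Finset F)
    (hS : ∀ k, S k = (Finset.univ.filter (fun j : Fin n => (j : ℕ) < k)).image p)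
    (x : ℕ → ∀ i, D i)
    (hx : ∀ k, x k = fun i => if i ∈ S k then b i else v i) :
    ∃ k ≤ n,
      f (x k) ≠ c ∧
      (∀ m < k, f (x m) = c) ∧
      -- S_k is a contrastive set
      (∃ y : ∀ i, D i, (∀ i ∉ S k, y i = v i) ∧ f y ≠ c) ∧
      -- and hence contains a contrastive explanation
      (∃ Y : Finset F, Y ⊆ S k ∧
        (∃ y : ∀ i, D i, (∀ i ∉ Y, y i = v i) ∧ f y ≠ c) ∧
        ∀ Y' : Finset F, Y' ⊂ Y →
          ¬ (∃ y : ∀ i, D i, (∀ i ∉ Y', y i = v i) ∧ f y ≠ c)) := by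
  classical
  have hxn : x n = b := by
    rw [hx]
    funext i
    have hi : i ∈ S n := by
      rw [hS]
      obtain ⟨j, hj⟩ := hp.2 i
      exact Finset.mem_image.2 ⟨j, Finset.mem_filter.2 ⟨Finset.mem_univ _, j.2⟩, hj⟩
    simp [hi]
  have hex : ∃ k, f (x k) ≠ c := ⟨n, by rw [hxn]; exact hb⟩
  set k := Nat.find hex with hk
  have hkspec : f (x k) ≠ c := Nat.find_spec hex
  have hkmin : ∀ m < k, f (x m) = c := fun m hm => by
    have := Nat.find_min hex hm
    simpa using this
  have hkn : k ≤ n := Nat.find_min' hex (by rw [hxn]; exact hb)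
  refine ⟨k, hkn, hkspec, hkmin, ?_, ?_⟩
  · refine ⟨x k, fun i hi => ?_, hkspec⟩
    rw [hx]; simp [hi]
  · exact min_contrastive f v c (S k) ⟨x k, fun i hi => by rw [hx]; simp [hi], hkspec⟩
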